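/- Let N, d ≥ 1 and let x_1, …, x_N ∈ ℝ^d be arbitrary points, with coordinates x_{i,j} for j ∈ {1,…,d}. Then (i) there exists a vector b ∈ ℝ^d such that dist(x_{i,j} − b_j, ℤ) ≥ 1/(2N) for all i ∈ {1,…,N} and j ∈ {1,…,d}; and (ii) there exists a vector b̄ ∈ ℝ^d each of whose coordinates is an integer multiple of 2^{−⌈log₂(6N)⌉} such that dist(x_{i,j} − b̄_j, ℤ) ≥ 1/(3N) for all i ∈ {1,…,N} and j ∈ {1,…,d}. -/

import Mathlib

lemma key_far (N : ℕ) (hN : 1 ≤ N) (y : Fin N → ℝ) :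
    ∃ b : ℝ, ∀ i : Fin N, ∀ n : ℤ, 1 / (2 * (N : ℝ)) ≤ |y i - b - (n : ℝ)| := by
  have hN0 : (0:ℝ) < N := by exact_mod_cast hN
  set r : ℝ := 1 / (2 * (N:ℝ)) with hr_def
  have hr0 : 0 < r := by positivity
  have hr2 : 2 * r = 1 / N := by rw [hr_def]; field_simp
  set g : Fin N → ℝ := fun i => Int.fract (y i) with hg
  have hg0 : ∀ i, 0 ≤ g i := fun i => Int.fract_nonneg _
  have hg1 : ∀ i, g i < 1 := fun i => Int.fract_lt_one _
  set σ := Tuple.sort g with hσ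
  set G : Fin N → ℝ := g ∘ σ with hG
  have hmono : Monotone G := Tuple.monotone_sort g
  have hG0 : ∀ j, 0 ≤ G j := fun j => hg0 (σ j)
  have hG1 : ∀ j, G j < 1 := fun j => hg1 (σ j)
  have hGg : ∀ i : Fin N, g i = G (σ⁻¹ i) := by
    intro i; simp [hG]
  have main : ∃ b : ℝ, ∀ j : Fin N,
      (r ≤ G j - b ∧ G j - b ≤ 1 - r) ∨ (r - 1 ≤ G j - b ∧ G j - b ≤ -r) := by
    have hlast : N - 1 < N := by omega
    by_cases hA : ∃ k, ∃ h : k + 1 < N, 1 / N ≤ G ⟨k+1, h⟩ - G ⟨k, by omega⟩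
    · obtain ⟨k, hk, hgap⟩ := hA
      have hkN : k < N := by omega
      refine ⟨G ⟨k, hkN⟩ + r, fun j => ?_⟩
      have h1 : G ⟨k+1, hk⟩ < 1 := hG1 _
      have h0 : 0 ≤ G ⟨k, hkN⟩ := hG0 _
      have hj1 : G j < 1 := hG1 j
      have hj0 : 0 ≤ G j := hG0 j
      by_cases hj : (j : ℕ) ≤ k
      · right
        have : G j ≤ G ⟨k, hkN⟩ := hmono (by simpa [Fin.le_def] using hj)
        constructor <;> linarith [hr2]
      · left
        have : G ⟨k+1, hk⟩ ≤ G j := hmono (by simp [Fin.le_def]; omega)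
        constructor <;> linarith [hr2]
    · push_neg at hA
      set first : Fin N := ⟨0, by omega⟩ with hfirst
      have claim : ∀ k (hk : k < N), G ⟨k, hk⟩ ≤ G first + k / N := by
        intro k
        induction k with
        | zero => intro hk; simp [hfirst]
        | succ k ih =>
          intro hk
          have hkN : k < N := by omega
          have := hA k hk
          have := ih hkN
          have hcast : ((k+1 : ℕ) : ℝ) / N = (k:ℝ)/N + 1/N := by
            push_cast; field_simp
          rw [hcast]
          linarith
      obtain ⟨b, hb⟩ : ∃ b, b = G first - r := ⟨_, rfl⟩
      refine ⟨b, fun j => ?_⟩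
      left
      have hjf : G first ≤ G j := hmono (Fin.le_def.mpr (Nat.zero_le _))
      have hjl : G j ≤ G first + ((N-1 : ℕ) : ℝ) / N := by
        have : G j ≤ G ⟨N-1, hlast⟩ := hmono (by simp [Fin.le_def]; omega)
        linarith [claim (N-1) hlast]
      have hcast2 : ((N-1 : ℕ) : ℝ) / N = 1 - 1/N := by
        rw [Nat.cast_sub hN]; field_simp; simp
      rw [hcast2] at hjl
      constructor <;> (rw [hb]; linarith [hr2])
  obtain ⟨b, hb⟩ := main
  refine ⟨b, fun i n => ?_⟩
  have hrepr : y i - b - (n : ℝ) = (g i - b) - ((n - ⌊y i⌋ : ℤ) : ℝ) := by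
    simp only [hg, Int.fract]
    push_cast
    ring
  rw [hrepr]
  set m : ℤ := n - ⌊y i⌋ with hm
  rw [hGg i]
  rcases hb (σ⁻¹ i) with ⟨h1, h2⟩ | ⟨h1, h2⟩
  · rcases le_or_gt m 0 with hm0 | hm0
    · have : (m:ℝ) ≤ 0 := by exact_mod_cast hm0
      exact le_abs.mpr (Or.inl (by linarith))
    · have : (1:ℝ) ≤ m := by exact_mod_cast hm0
      exact le_abs.mpr (Or.inr (by linarith))
  · rcases le_or_gt m (-1) with hm0 | hm0
    · have : (m:ℝ) ≤ -1 := by exact_mod_cast hm0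
      exact le_abs.mpr (Or.inl (by linarith))
    · have : (0:ℝ) ≤ m := by exact_mod_cast (by omega : (0:ℤ) ≤ m)
      exact le_abs.mpr (Or.inr (by linarith))

/-- **Avoiding being near the grid.** For any `N` points `x_1,…,x_N ∈ ℝ^d`:
(i) there is a translation `b ∈ ℝ^d` with `dist(x_{i,j} - b_j, ℤ) ≥ 1/(2N)` for all `i, j`;
(ii) there is a translation `b̄ ∈ ℝ^d`, each coordinate of which is an integer multiple of
`2^{-⌈log₂(6N)⌉}`, with `dist(x_{i,j} - b̄_j, ℤ) ≥ 1/(3N)` for all `i, j`.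
Here `dist(r, ℤ) ≥ c` is expressed as `∀ n : ℤ, c ≤ |r - n|`. -/
theorem exists_translation_far_from_lattice
    (N d : ℕ) (hN : 1 ≤ N) (hd : 1 ≤ d) (x : Fin N → Fin d → ℝ) :
    (∃ b : Fin d → ℝ, ∀ i : Fin N, ∀ j : Fin d, ∀ n : ℤ,
        1 / (2 * (N : ℝ)) ≤ |x i j - b j - (n : ℝ)|) ∧
    (∃ bbar : Fin d → ℝ,
      (∀ j : Fin d, ∃ z : ℤ,
          bbar j = (z : ℝ) * (2 : ℝ) ^ (-⌈Real.logb 2 (6 * (N : ℝ))⌉)) ∧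
      (∀ i : Fin N, ∀ j : Fin d, ∀ n : ℤ,
          1 / (3 * (N : ℝ)) ≤ |x i j - bbar j - (n : ℝ)|)) := by
  have hN0 : (0:ℝ) < N := by exact_mod_cast hN
  choose b hb using fun j => key_far N hN (fun i => x i j)
  refine ⟨⟨b, fun i j n => hb j i n⟩, ?_⟩
  set L : ℤ := ⌈Real.logb 2 (6 * (N : ℝ))⌉ with hL
  set δ : ℝ := (2:ℝ) ^ (-L) with hδ
  have hδ0 : 0 < δ := by positivity
  have hδle : δ ≤ 1 / (6 * N) := by
    have hc : (0:ℝ) < 6 * N := by positivity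
    have h1 : Real.logb 2 (6 * N) ≤ (L : ℝ) := Int.le_ceil _
    have h2 : (6 * (N:ℝ)) ≤ (2:ℝ) ^ (L:ℝ) := by
      calc (6 * (N:ℝ)) = (2:ℝ) ^ Real.logb 2 (6 * N) := by
            rw [Real.rpow_logb (by norm_num) (by norm_num) hc]
        _ ≤ (2:ℝ) ^ (L:ℝ) := by
            apply Real.rpow_le_rpow_of_exponent_le (by norm_num) h1
    rw [Real.rpow_intCast] at h2
    rw [hδ, zpow_neg, one_div]
    exact inv_anti₀ hc h2
  refine ⟨fun j => (round (b j / δ) : ℝ) * δ, fun j => ⟨round (b j / δ), rfl⟩, ?_⟩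
  intro i j n
  have hclose : |b j - (round (b j / δ) : ℝ) * δ| ≤ δ / 2 := by
    have h := abs_sub_round (b j / δ)
    have he : b j - (round (b j / δ) : ℝ) * δ = (b j / δ - round (b j / δ)) * δ := by
      field_simp
    rw [he, abs_mul, abs_of_pos hδ0]
    calc |b j / δ - (round (b j / δ) : ℝ)| * δ ≤ (1/2) * δ :=
          mul_le_mul_of_nonneg_right h hδ0.le
      _ = δ / 2 := by ring
  have htri : |x i j - b j - (n:ℝ)| - |b j - (round (b j / δ) : ℝ) * δ|
      ≤ |x i j - (round (b j / δ) : ℝ) * δ - (n:ℝ)| := by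
    have h := abs_sub_abs_le_abs_sub (x i j - b j - (n:ℝ)) (-(b j - (round (b j / δ) : ℝ) * δ))
    rw [abs_neg, sub_neg_eq_add] at h
    calc |x i j - b j - (n:ℝ)| - |b j - (round (b j / δ) : ℝ) * δ|
        ≤ |(x i j - b j - (n:ℝ)) + (b j - (round (b j / δ) : ℝ) * δ)| := h
      _ = |x i j - (round (b j / δ) : ℝ) * δ - (n:ℝ)| := by ring_nf
  have hkey := hb j i n
  have he2 : (1:ℝ)/(2*N) - 1/(3*N) = 1/(6*N) := by
    field_simp
    ring
  linarith
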